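/- Let α ∈ (0, 2π) and k ∈ ℝ. If for both choices of sign ± the inequality ((1/2 − α/(2π) − (k ± 1/4))²)/(α/(2π)) + (1/4)² ≥ ((1/2 − α/(2π) − k)²)/(α/(2π)) holds, then (1 − 1/4)/2 − (1 + 1/8)·α/(2π) ≤ k ≤ (1 + 1/4)/2 − (1 − 1/8)·α/(2π). -/
import Mathlib


open Real

/-- Balanced boundary singularities optimality condition. -/
theorem balanced_boundary_singularities (α k : ℝ)
    (hα0 : 0 < α) (hα2 : α < 2 * π)
    (h : ∀ s : ℝ, s = 1 ∨ s = -1 →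
      ((1/2 - α/(2*π) - (k + s * (1/4)))^2) / (α/(2*π)) + (1/4)^2 ≥
        ((1/2 - α/(2*π) - k)^2) / (α/(2*π))) :
    (1 - 1/4)/2 - (1 + 1/8) * (α/(2*π)) ≤ k ∧
      k ≤ (1 + 1/4)/2 - (1 - 1/8) * (α/(2*π)) := by
  set a := α/(2*π) with ha_def
  have ha : 0 < a := div_pos hα0 (by positivity)
  have h1 := h 1 (Or.inl rfl)
  have h2 := h (-1) (Or.inr rfl)
  have e1 : -(1/16 : ℝ) ≤ ((1/2 - a - (k + 1 * (1/4)))^2 - (1/2 - a - k)^2) / a := by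
    rw [sub_div]; linarith [h1]
  have e2 : -(1/16 : ℝ) ≤ ((1/2 - a - (k + (-1) * (1/4)))^2 - (1/2 - a - k)^2) / a := by
    rw [sub_div]; linarith [h2]
  rw [le_div_iff₀ ha] at e1 e2
  constructor <;> nlinarith [e1, e2]
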